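/- Let c : X×X → ℝ be continuous and τ > 0. Then the entropic optimal transport cost T_τ is convex separately in each of its arguments: for all μ₀, μ₁, ν ∈ P(X) and every t ∈ [0,1], T_τ((1−t)μ₀ + tμ₁, ν) ≤ (1−t) T_τ(μ₀, ν) + t T_τ(μ₁, ν), and symmetrically in the second argument. -/

import Mathlib

open MeasureTheory Real Set

abbrev Pt (d : ℕ) := EuclideanSpace ℝ (Fin d)

-- Relative entropy `H(γ|ρ)`, with values in `(-∞, +∞]`.
open Classical in
noncomputable def relEnt {α : Type*} [MeasurableSpace α] (γ ρ : Measure α) : EReal :=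
  if γ ≪ ρ ∧ Integrable (fun x => Real.log ((γ.rnDeriv ρ x).toReal)) γ
  then ((∫ x, Real.log ((γ.rnDeriv ρ x).toReal) ∂γ : ℝ) : EReal)
  else ⊤

-- Entropic optimal transport cost `T_τ(μ,ν) = inf_{γ ∈ Π(μ,ν)} ∫ c dγ + τ H(γ|μ⊗ν)`.
noncomputable def EOT {α : Type*} [MeasurableSpace α] (c : α × α → ℝ) (τ : ℝ)
    (μ ν : Measure α) : EReal :=
  ⨅ γ : {γ : Measure (α × α) // γ.map Prod.fst = μ ∧ γ.map Prod.snd = ν},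
    ((∫ q, c q ∂(γ : Measure (α × α)) : ℝ) : EReal)
      + (τ : EReal) * relEnt (γ : Measure (α × α)) (μ.prod ν)


section Aux
namespace EOTAux

set_option linter.unusedSectionVars false

variable {α : Type*} [MeasurableSpace α]


lemma sub_one_le_mul_log {x : ℝ} (hx : 0 ≤ x) : x - 1 ≤ x * Real.log x := by
  rcases eq_or_lt_of_le hx with h | h
  · simp [← h]
  · have h1 : Real.log x⁻¹ ≤ x⁻¹ - 1 := Real.log_le_sub_one_of_pos (by positivity)
    rw [Real.log_inv] at h1
    have h2 := mul_le_mul_of_nonneg_left h1 h.le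
    rw [mul_sub, mul_inv_cancel₀ h.ne'] at h2
    linarith

lemma logsum_pointwise {s t b₀ b₁ c₀ c₁ : ℝ} (hs : 0 ≤ s) (ht : 0 ≤ t)
    (hb₀ : 0 ≤ b₀) (hb₁ : 0 ≤ b₁) (hc₀ : 0 ≤ c₀) (hc₁ : 0 ≤ c₁)
    (hone : s * b₀ + t * b₁ = 1) :
    (s * (c₀ * b₀) + t * (c₁ * b₁)) * log (s * (c₀ * b₀) + t * (c₁ * b₁))
      ≤ s * (c₀ * b₀ * log c₀) + t * (c₁ * b₁ * log c₁) := by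
  have h := Real.convexOn_mul_log.2 (mem_Ici.2 hc₀) (mem_Ici.2 hc₁)
    (mul_nonneg hs hb₀) (mul_nonneg ht hb₁) hone
  simp only [smul_eq_mul] at h
  have e : s * (c₀ * b₀) + t * (c₁ * b₁) = s * b₀ * c₀ + t * b₁ * c₁ := by ring
  rw [e]
  refine h.trans_eq ?_
  ring

open Classical in
lemma relEnt_eq_llr (γ ρ : Measure α) :
    relEnt γ ρ = if γ ≪ ρ ∧ Integrable (llr γ ρ) γ
      then ((∫ x, llr γ ρ x ∂γ : ℝ) : EReal) else ⊤ := rfl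

lemma relEnt_ne_bot (γ ρ : Measure α) : relEnt γ ρ ≠ ⊥ := by
  rw [relEnt_eq_llr]; split <;> simp

lemma relEnt_self (ρ : Measure α) [IsFiniteMeasure ρ] : relEnt ρ ρ = 0 := by
  have h0 : llr ρ ρ =ᵐ[ρ] 0 := by
    filter_upwards [Measure.rnDeriv_self ρ] with x hx
    simp [llr, hx]
  rw [relEnt_eq_llr, if_pos ⟨Measure.AbsolutelyContinuous.refl ρ,
    (integrable_zero _ _ _).congr h0.symm⟩, integral_congr_ae h0]
  simp

lemma relEnt_nonneg (γ ρ : Measure α) [IsProbabilityMeasure γ] [IsProbabilityMeasure ρ] :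
    0 ≤ relEnt γ ρ := by
  rw [relEnt_eq_llr]
  split
  case isFalse => exact le_top
  case isTrue h =>
    obtain ⟨hac, hint⟩ := h
    have h1 : ∫ x, llr γ ρ x ∂γ
        = ∫ x, (γ.rnDeriv ρ x).toReal * Real.log ((γ.rnDeriv ρ x).toReal) ∂ρ := by
      rw [← integral_rnDeriv_smul hac (f := llr γ ρ)]
      simp [llr, smul_eq_mul]
    have h2 : ∫ x, ((γ.rnDeriv ρ x).toReal - 1) ∂ρ
        ≤ ∫ x, (γ.rnDeriv ρ x).toReal * Real.log ((γ.rnDeriv ρ x).toReal) ∂ρ := by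
      refine integral_mono_ae ((Measure.integrable_toReal_rnDeriv).sub (integrable_const 1)) ?_
        (Filter.Eventually.of_forall fun x => sub_one_le_mul_log ENNReal.toReal_nonneg)
      have := (integrable_rnDeriv_smul_iff hac (f := llr γ ρ)).2 hint
      simpa [llr, smul_eq_mul] using this
    have h3 : ∫ x, ((γ.rnDeriv ρ x).toReal - 1) ∂ρ = 0 := by
      rw [integral_sub Measure.integrable_toReal_rnDeriv (integrable_const 1),
        Measure.integral_toReal_rnDeriv hac]
      simp
    have : (0:ℝ) ≤ ∫ x, llr γ ρ x ∂γ := by rw [h1]; linarith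
    exact_mod_cast this


lemma isFiniteMeasure_ofReal_smul (r : ℝ) (μ : Measure α) [IsFiniteMeasure μ] :
    IsFiniteMeasure (ENNReal.ofReal r • μ) := by
  constructor
  rw [Measure.smul_apply, smul_eq_mul]
  exact ENNReal.mul_lt_top ENNReal.ofReal_lt_top (measure_lt_top _ _)

lemma relEnt_convex (γ₀ γ₁ ρ₀ ρ₁ : Measure α)
    [IsProbabilityMeasure γ₀] [IsProbabilityMeasure γ₁]
    [IsProbabilityMeasure ρ₀] [IsProbabilityMeasure ρ₁]
    {s t : ℝ} (hs : 0 < s) (ht : 0 < t) (hst : s + t = 1)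
    (hac₀ : γ₀ ≪ ρ₀) (hac₁ : γ₁ ≪ ρ₁)
    (hint₀ : Integrable (llr γ₀ ρ₀) γ₀) (hint₁ : Integrable (llr γ₁ ρ₁) γ₁) :
    relEnt (ENNReal.ofReal s • γ₀ + ENNReal.ofReal t • γ₁)
        (ENNReal.ofReal s • ρ₀ + ENNReal.ofReal t • ρ₁)
      ≤ ((s * ∫ x, llr γ₀ ρ₀ x ∂γ₀ + t * ∫ x, llr γ₁ ρ₁ x ∂γ₁ : ℝ) : EReal) := by
  haveI := isFiniteMeasure_ofReal_smul s γ₀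
  haveI := isFiniteMeasure_ofReal_smul t γ₁
  haveI := isFiniteMeasure_ofReal_smul s ρ₀
  haveI := isFiniteMeasure_ofReal_smul t ρ₁
  set γ : Measure α := ENNReal.ofReal s • γ₀ + ENNReal.ofReal t • γ₁ with hγdef
  set ρ : Measure α := ENNReal.ofReal s • ρ₀ + ENNReal.ofReal t • ρ₁ with hρdef
  have hκ0 : ENNReal.ofReal s ≠ 0 := by simp [ENNReal.ofReal_eq_zero, not_le, hs]
  have hθ0 : ENNReal.ofReal t ≠ 0 := by simp [ENNReal.ofReal_eq_zero, not_le, ht]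
  have hρ₀ρ : ρ₀ ≪ ρ := by
    intro A hA
    rw [hρdef, Measure.add_apply, Measure.smul_apply, Measure.smul_apply, smul_eq_mul,
      smul_eq_mul, add_eq_zero, mul_eq_zero, mul_eq_zero] at hA
    exact hA.1.resolve_left hκ0
  have hρ₁ρ : ρ₁ ≪ ρ := by
    intro A hA
    rw [hρdef, Measure.add_apply, Measure.smul_apply, Measure.smul_apply, smul_eq_mul,
      smul_eq_mul, add_eq_zero, mul_eq_zero, mul_eq_zero] at hA
    exact hA.2.resolve_left hθ0
  have hγ₀ρ : γ₀ ≪ ρ := hac₀.trans hρ₀ρ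
  have hγ₁ρ : γ₁ ≪ ρ := hac₁.trans hρ₁ρ
  have hγρ : γ ≪ ρ := by
    intro A hA
    rw [hγdef, Measure.add_apply, Measure.smul_apply, Measure.smul_apply, smul_eq_mul,
      smul_eq_mul, hγ₀ρ hA, hγ₁ρ hA, mul_zero, mul_zero, add_zero]
  -- notation for densities
  set A₀ : α → ℝ := fun x => (γ₀.rnDeriv ρ x).toReal with hA₀
  set A₁ : α → ℝ := fun x => (γ₁.rnDeriv ρ x).toReal with hA₁
  -- fact1 : density of γ
  have fact1 : (fun x => (γ.rnDeriv ρ x).toReal) =ᵐ[ρ] fun x => s * A₀ x + t * A₁ x := by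
    filter_upwards [Measure.rnDeriv_add (ENNReal.ofReal s • γ₀) (ENNReal.ofReal t • γ₁) ρ,
      Measure.rnDeriv_smul_left_of_ne_top γ₀ ρ ENNReal.ofReal_ne_top,
      Measure.rnDeriv_smul_left_of_ne_top γ₁ ρ ENNReal.ofReal_ne_top,
      Measure.rnDeriv_ne_top γ₀ ρ, Measure.rnDeriv_ne_top γ₁ ρ] with x h1 h2 h3 h4 h5
    rw [hγdef, h1, Pi.add_apply, h2, h3, Pi.smul_apply, Pi.smul_apply, smul_eq_mul, smul_eq_mul,
      ENNReal.toReal_add (ENNReal.mul_ne_top ENNReal.ofReal_ne_top h4)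
        (ENNReal.mul_ne_top ENNReal.ofReal_ne_top h5),
      ENNReal.toReal_mul, ENNReal.toReal_mul, ENNReal.toReal_ofReal hs.le,
      ENNReal.toReal_ofReal ht.le]
  -- fact2 : densities of ρ₀, ρ₁ sum to 1
  have fact2 : ∀ᵐ x ∂ρ, s * (ρ₀.rnDeriv ρ x).toReal + t * (ρ₁.rnDeriv ρ x).toReal = 1 := by
    filter_upwards [Measure.rnDeriv_add (ENNReal.ofReal s • ρ₀) (ENNReal.ofReal t • ρ₁) ρ,
      Measure.rnDeriv_smul_left_of_ne_top ρ₀ ρ ENNReal.ofReal_ne_top,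
      Measure.rnDeriv_smul_left_of_ne_top ρ₁ ρ ENNReal.ofReal_ne_top,
      Measure.rnDeriv_ne_top ρ₀ ρ, Measure.rnDeriv_ne_top ρ₁ ρ,
      Measure.rnDeriv_self ρ] with x h1 h2 h3 h4 h5 h6
    have h7' : (1:ENNReal) = ENNReal.ofReal s * ρ₀.rnDeriv ρ x + ENNReal.ofReal t * ρ₁.rnDeriv ρ x := by
      rw [← h6]
      show (ENNReal.ofReal s • ρ₀ + ENNReal.ofReal t • ρ₁).rnDeriv ρ x = _
      rw [h1, Pi.add_apply, h2, h3, Pi.smul_apply, Pi.smul_apply, smul_eq_mul, smul_eq_mul]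
    have h7 := congrArg ENNReal.toReal h7'
    rw [ENNReal.toReal_one,
      ENNReal.toReal_add (ENNReal.mul_ne_top ENNReal.ofReal_ne_top h4)
        (ENNReal.mul_ne_top ENNReal.ofReal_ne_top h5),
      ENNReal.toReal_mul, ENNReal.toReal_mul, ENNReal.toReal_ofReal hs.le,
      ENNReal.toReal_ofReal ht.le] at h7
    exact h7.symm
  -- fact3/fact4 : chain rule
  have fact3 : ∀ᵐ x ∂ρ, A₀ x = (γ₀.rnDeriv ρ₀ x).toReal * (ρ₀.rnDeriv ρ x).toReal := by
    filter_upwards [Measure.rnDeriv_mul_rnDeriv hac₀ (κ := ρ)] with x h1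
    rw [hA₀]
    simp only
    rw [← h1, Pi.mul_apply, ENNReal.toReal_mul]
  have fact4 : ∀ᵐ x ∂ρ, A₁ x = (γ₁.rnDeriv ρ₁ x).toReal * (ρ₁.rnDeriv ρ x).toReal := by
    filter_upwards [Measure.rnDeriv_mul_rnDeriv hac₁ (κ := ρ)] with x h1
    rw [hA₁]
    simp only
    rw [← h1, Pi.mul_apply, ENNReal.toReal_mul]
  -- integrability of transferred llr's
  have hI₀ : Integrable (fun x => A₀ x * llr γ₀ ρ₀ x) ρ := by
    have := (integrable_rnDeriv_smul_iff hγ₀ρ (f := llr γ₀ ρ₀)).2 hint₀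
    simpa [smul_eq_mul] using this
  have hI₁ : Integrable (fun x => A₁ x * llr γ₁ ρ₁ x) ρ := by
    have := (integrable_rnDeriv_smul_iff hγ₁ρ (f := llr γ₁ ρ₁)).2 hint₁
    simpa [smul_eq_mul] using this
  have hIv₀ : ∫ x, A₀ x * llr γ₀ ρ₀ x ∂ρ = ∫ x, llr γ₀ ρ₀ x ∂γ₀ := by
    rw [← integral_rnDeriv_smul hγ₀ρ (f := llr γ₀ ρ₀)]
    simp [smul_eq_mul]
    rfl
  have hIv₁ : ∫ x, A₁ x * llr γ₁ ρ₁ x ∂ρ = ∫ x, llr γ₁ ρ₁ x ∂γ₁ := by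
    rw [← integral_rnDeriv_smul hγ₁ρ (f := llr γ₁ ρ₁)]
    simp [smul_eq_mul]
    rfl
  -- the function G
  set G : α → ℝ := fun x => (s * A₀ x + t * A₁ x) * log (s * A₀ x + t * A₁ x) with hG
  have hFnn : ∀ x, 0 ≤ s * A₀ x + t * A₁ x := fun x =>
    add_nonneg (mul_nonneg hs.le ENNReal.toReal_nonneg) (mul_nonneg ht.le ENNReal.toReal_nonneg)
  have hGlb : ∀ x, -1 ≤ G x := by
    intro x
    have h1 := sub_one_le_mul_log (hFnn x)
    have := hFnn x
    simp only [hG]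
    linarith
  have hptwise : ∀ᵐ x ∂ρ, G x ≤ s * (A₀ x * llr γ₀ ρ₀ x) + t * (A₁ x * llr γ₁ ρ₁ x) := by
    filter_upwards [fact2, fact3, fact4] with x h2 h3 h4
    simp only [hG, h3, h4, llr]
    exact logsum_pointwise hs.le ht.le ENNReal.toReal_nonneg ENNReal.toReal_nonneg
      ENNReal.toReal_nonneg ENNReal.toReal_nonneg h2
  have hGmeas : Measurable G := by
    have hF : Measurable (fun x => s * A₀ x + t * A₁ x) :=
      ((measurable_const.mul (Measure.measurable_rnDeriv γ₀ ρ).ennreal_toReal).add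
        (measurable_const.mul (Measure.measurable_rnDeriv γ₁ ρ).ennreal_toReal))
    exact hF.mul (Real.measurable_log.comp hF)
  have hGint : Integrable G ρ := by
    refine Integrable.mono'
      (g := fun x => |s * (A₀ x * llr γ₀ ρ₀ x) + t * (A₁ x * llr γ₁ ρ₁ x)| + 1)
      (((hI₀.const_mul s).add (hI₁.const_mul t)).abs.add (integrable_const 1))
      hGmeas.aestronglyMeasurable ?_
    filter_upwards [hptwise] with x hx
    rw [Real.norm_eq_abs, abs_le]
    constructor
    · have := hGlb x
      have := abs_nonneg (s * (A₀ x * llr γ₀ ρ₀ x) + t * (A₁ x * llr γ₁ ρ₁ x))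
      linarith
    · have := le_abs_self (s * (A₀ x * llr γ₀ ρ₀ x) + t * (A₁ x * llr γ₁ ρ₁ x))
      linarith
  have hGeq : (fun x => (γ.rnDeriv ρ x).toReal * llr γ ρ x) =ᵐ[ρ] G := by
    filter_upwards [fact1] with x h1
    simp only [llr, hG, h1]
  have hcond : Integrable (llr γ ρ) γ := by
    rw [← integrable_rnDeriv_smul_iff hγρ (f := llr γ ρ)]
    simp only [smul_eq_mul]
    exact hGint.congr hGeq.symm
  have hval : ∫ x, llr γ ρ x ∂γ = ∫ x, G x ∂ρ := by
    rw [← integral_rnDeriv_smul hγρ (f := llr γ ρ)]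
    simp only [smul_eq_mul]
    exact integral_congr_ae hGeq
  have hmono : ∫ x, G x ∂ρ
      ≤ s * ∫ x, llr γ₀ ρ₀ x ∂γ₀ + t * ∫ x, llr γ₁ ρ₁ x ∂γ₁ := by
    have := integral_mono_ae hGint ((hI₀.const_mul s).add (hI₁.const_mul t)) hptwise
    simp only [Pi.add_apply] at this
    rwa [integral_add (hI₀.const_mul s) (hI₁.const_mul t), integral_const_mul,
      integral_const_mul, hIv₀, hIv₁] at this
  rw [relEnt_eq_llr, if_pos ⟨hγρ, hcond⟩]
  exact EReal.coe_le_coe_iff.2 (hval ▸ hmono)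

lemma coupling_prob {γ : Measure (α × α)} {μ : Measure α} [IsProbabilityMeasure μ]
    (h1 : γ.map Prod.fst = μ) : IsProbabilityMeasure γ := by
  constructor
  have h := congrArg (fun m : Measure α => m univ) h1
  rw [Measure.map_apply measurable_fst MeasurableSet.univ, preimage_univ] at h
  rw [h, measure_univ]

lemma coupling_null_compl {X : Set α} (hX : MeasurableSet X) {γ : Measure (α × α)}
    {μ ν : Measure α} (h1 : γ.map Prod.fst = μ) (h2 : γ.map Prod.snd = ν)
    (hμ : μ Xᶜ = 0) (hν : ν Xᶜ = 0) : γ (X ×ˢ X)ᶜ = 0 := by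
  have hsub : (X ×ˢ X)ᶜ ⊆ (Prod.fst ⁻¹' Xᶜ) ∪ (Prod.snd ⁻¹' Xᶜ) := by
    intro q hq
    simp only [mem_compl_iff, mem_prod, not_and_or] at hq
    simpa only [mem_union, mem_preimage, mem_compl_iff] using hq
  refine measure_mono_null hsub (measure_union_null ?_ ?_)
  · calc γ (Prod.fst ⁻¹' Xᶜ) = (γ.map Prod.fst) Xᶜ :=
          (Measure.map_apply measurable_fst hX.compl).symm
      _ = 0 := by rw [h1, hμ]
  · calc γ (Prod.snd ⁻¹' Xᶜ) = (γ.map Prod.snd) Xᶜ :=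
          (Measure.map_apply measurable_snd hX.compl).symm
      _ = 0 := by rw [h2, hν]

lemma ereal_mul_nonneg {a b : EReal} (ha : 0 ≤ a) (hb : 0 ≤ b) : 0 ≤ a * b := by
  rcases ha.lt_or_eq with ha' | ha'
  · rcases hb.lt_or_eq with hb' | hb'
    · exact (EReal.mul_pos ha' hb').le
    · rw [← hb', mul_zero]
  · rw [← ha', zero_mul]

lemma ofReal_smul_prod {β : Type*} [MeasurableSpace β] (r : ℝ) (μ : Measure α) (ν : Measure β)
    [IsFiniteMeasure μ] [IsFiniteMeasure ν] :
    (ENNReal.ofReal r • μ).prod ν = ENNReal.ofReal r • (μ.prod ν) := by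
  haveI := isFiniteMeasure_ofReal_smul r μ
  refine Measure.prod_eq fun s t hs ht => ?_
  simp only [Measure.smul_apply, Measure.prod_prod, smul_eq_mul]
  ring

lemma prod_ofReal_smul {β : Type*} [MeasurableSpace β] (r : ℝ) (μ : Measure α) (ν : Measure β)
    [IsFiniteMeasure μ] [IsFiniteMeasure ν] :
    μ.prod (ENNReal.ofReal r • ν) = ENNReal.ofReal r • (μ.prod ν) := by
  haveI := isFiniteMeasure_ofReal_smul r ν
  refine Measure.prod_eq fun s t hs ht => ?_
  simp only [Measure.smul_apply, Measure.prod_prod, smul_eq_mul]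
  ring


lemma relEnt_map {β : Type*} [MeasurableSpace β] (e : α ≃ᵐ β) (γ ρ : Measure α)
    [IsFiniteMeasure γ] [IsFiniteMeasure ρ] :
    relEnt (γ.map e) (ρ.map e) = relEnt γ ρ := by
  have hac_iff : γ.map e ≪ ρ.map e ↔ γ ≪ ρ := by
    constructor
    · intro h
      have h2 := h.map e.symm.measurable
      rwa [Measure.map_map e.symm.measurable e.measurable,
        Measure.map_map e.symm.measurable e.measurable,
        show (⇑e.symm ∘ ⇑e) = id from funext fun x => e.symm_apply_apply x,
        Measure.map_id, Measure.map_id] at h2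
    · exact fun h => h.map e.measurable
  by_cases hac : γ ≪ ρ
  · have hmap_ac : γ.map e ≪ ρ.map e := hac.map e.measurable
    have hd := e.measurableEmbedding.rnDeriv_map γ ρ
    have hdγ : (fun x => (γ.map e).rnDeriv (ρ.map e) (e x)) =ᵐ[γ] γ.rnDeriv ρ :=
      hd.filter_mono hac.ae_le
    have hllr : (fun x => llr (γ.map ⇑e) (ρ.map ⇑e) (e x)) =ᵐ[γ] llr γ ρ := by
      filter_upwards [hdγ] with x hx
      simp only [llr, hx]
    have hint_iff : Integrable (llr (γ.map e) (ρ.map e)) (γ.map e) ↔ Integrable (llr γ ρ) γ := by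
      rw [integrable_map_measure (measurable_llr _ _).aestronglyMeasurable
        e.measurable.aemeasurable]
      exact integrable_congr hllr
    have hval : ∫ y, llr (γ.map e) (ρ.map e) y ∂(γ.map e) = ∫ x, llr γ ρ x ∂γ := by
      rw [integral_map e.measurable.aemeasurable (measurable_llr _ _).aestronglyMeasurable]
      exact integral_congr_ae hllr
    by_cases hint : Integrable (llr γ ρ) γ
    · rw [relEnt_eq_llr, relEnt_eq_llr, if_pos ⟨hmap_ac, hint_iff.2 hint⟩, if_pos ⟨hac, hint⟩, hval]
    · rw [relEnt_eq_llr, relEnt_eq_llr, if_neg, if_neg]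
      · tauto
      · rw [hint_iff]; tauto
  · rw [relEnt_eq_llr, relEnt_eq_llr, if_neg, if_neg]
    · tauto
    · rw [hac_iff]; tauto

lemma EOT_swap_le (c : α × α → ℝ) (hc : Measurable c) (τ : ℝ) (μ ν : Measure α)
    [IsProbabilityMeasure μ] [IsProbabilityMeasure ν] :
    EOT (fun q => c (q.2, q.1)) τ ν μ ≤ EOT c τ μ ν := by
  refine le_iInf fun γi => ?_
  obtain ⟨γ, h1, h2⟩ := γi
  haveI : IsProbabilityMeasure γ := coupling_prob h1
  have hs1 : (γ.map Prod.swap).map Prod.fst = ν := by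
    rw [Measure.map_map measurable_fst measurable_swap]
    exact h2
  have hs2 : (γ.map Prod.swap).map Prod.snd = μ := by
    rw [Measure.map_map measurable_snd measurable_swap]
    exact h1
  refine iInf_le_of_le ⟨γ.map Prod.swap, hs1, hs2⟩ ?_
  have hint : ∫ q, c (q.2, q.1) ∂(γ.map Prod.swap) = ∫ q, c q ∂γ :=
    integral_map (φ := Prod.swap) measurable_swap.aemeasurable
      (hc.comp measurable_swap).aestronglyMeasurable
  have hrel : relEnt (γ.map Prod.swap) (ν.prod μ) = relEnt γ (μ.prod ν) := by
    rw [← Measure.prod_swap]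
    exact relEnt_map (MeasurableEquiv.prodComm : α × α ≃ᵐ α × α) γ (μ.prod ν)
  simp only
  rw [hint, hrel]

lemma EOT_swap (c : α × α → ℝ) (hc : Measurable c) (τ : ℝ) (μ ν : Measure α)
    [IsProbabilityMeasure μ] [IsProbabilityMeasure ν] :
    EOT c τ μ ν = EOT (fun q => c (q.2, q.1)) τ ν μ := by
  refine le_antisymm ?_ (EOT_swap_le c hc τ μ ν)
  exact EOT_swap_le (fun q => c (q.2, q.1)) (hc.comp measurable_swap) τ ν μ


section Topo
variable [TopologicalSpace α] [BorelSpace α] [SecondCountableTopology α] [T2Space α]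

lemma coupling_ae_mem {X : Set α} (hX : MeasurableSet X) {γ : Measure (α × α)} {μ ν : Measure α}
    (h1 : γ.map Prod.fst = μ) (h2 : γ.map Prod.snd = ν)
    (hμ : μ Xᶜ = 0) (hν : ν Xᶜ = 0) : ∀ᵐ q ∂γ, q ∈ X ×ˢ X := by
  have hnull := coupling_null_compl hX h1 h2 hμ hν
  rw [ae_iff]
  exact hnull

lemma coupling_cost_integrable {X : Set α} (hX : MeasurableSet X) {c : α × α → ℝ}
    (hc : Continuous c) {M : ℝ} (hM : ∀ q ∈ X ×ˢ X, ‖c q‖ ≤ M) {γ : Measure (α × α)}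
    {μ ν : Measure α} [IsProbabilityMeasure μ]
    (h1 : γ.map Prod.fst = μ) (h2 : γ.map Prod.snd = ν)
    (hμ : μ Xᶜ = 0) (hν : ν Xᶜ = 0) : Integrable c γ := by
  haveI := coupling_prob h1
  refine Integrable.mono' (integrable_const M) hc.aestronglyMeasurable ?_
  filter_upwards [coupling_ae_mem hX h1 h2 hμ hν] with q hq using hM q hq

lemma coupling_cost_lb {X : Set α} (hX : MeasurableSet X) {c : α × α → ℝ}
    (hc : Continuous c) {M : ℝ} (hM : ∀ q ∈ X ×ˢ X, ‖c q‖ ≤ M) {γ : Measure (α × α)}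
    {μ ν : Measure α} [IsProbabilityMeasure μ]
    (h1 : γ.map Prod.fst = μ) (h2 : γ.map Prod.snd = ν)
    (hμ : μ Xᶜ = 0) (hν : ν Xᶜ = 0) : -M ≤ ∫ q, c q ∂γ := by
  haveI := coupling_prob h1
  have h := integral_mono_ae (integrable_const (-M))
    (coupling_cost_integrable hX hc hM h1 h2 hμ hν) ?_
  · simpa using h
  · filter_upwards [coupling_ae_mem hX h1 h2 hμ hν] with q hq
    have := hM q hq
    rw [Real.norm_eq_abs, abs_le] at this
    exact this.1

lemma EOT_exists_real {X : Set α} (hX : MeasurableSet X) {c : α × α → ℝ}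
    (hc : Continuous c) {M : ℝ} (hM : ∀ q ∈ X ×ˢ X, ‖c q‖ ≤ M) {τ : ℝ} (hτ : 0 ≤ τ)
    (μ ν : Measure α) [IsProbabilityMeasure μ] [IsProbabilityMeasure ν]
    (hμ : μ Xᶜ = 0) (hν : ν Xᶜ = 0) :
    ∃ r : ℝ, EOT c τ μ ν = (r : EReal) := by
  have hub : EOT c τ μ ν ≤ ((∫ q, c q ∂(μ.prod ν) : ℝ) : EReal) := by
    have hm1 : (μ.prod ν).map Prod.fst = μ := by
      rw [Measure.map_fst_prod]; simp
    have hm2 : (μ.prod ν).map Prod.snd = ν := by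
      rw [Measure.map_snd_prod]; simp
    have h := iInf_le (fun γ : {γ : Measure (α × α) //
        γ.map Prod.fst = μ ∧ γ.map Prod.snd = ν} =>
      ((∫ q, c q ∂(γ : Measure (α × α)) : ℝ) : EReal)
        + (τ : EReal) * relEnt (γ : Measure (α × α)) (μ.prod ν)) ⟨μ.prod ν, hm1, hm2⟩
    refine le_trans h ?_
    rw [relEnt_self, mul_zero, add_zero]
  have hlb : ((-M : ℝ) : EReal) ≤ EOT c τ μ ν := by
    refine le_iInf fun γi => ?_
    obtain ⟨γ, h1, h2⟩ := γi
    haveI := coupling_prob h1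
    calc ((-M : ℝ) : EReal) = ((-M : ℝ) : EReal) + 0 := (add_zero _).symm
      _ ≤ ((∫ q, c q ∂γ : ℝ) : EReal) + (τ : EReal) * relEnt γ (μ.prod ν) :=
        add_le_add (EReal.coe_le_coe_iff.2 (coupling_cost_lb hX hc hM h1 h2 hμ hν))
          (ereal_mul_nonneg (by exact_mod_cast hτ) (relEnt_nonneg γ (μ.prod ν)))
  refine ⟨(EOT c τ μ ν).toReal, (EReal.coe_toReal ?_ ?_).symm⟩
  · exact (hub.trans_lt (EReal.coe_lt_top _)).ne
  · exact ((EReal.bot_lt_coe _).trans_le hlb).ne'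

lemma EOT_convex_left {X : Set α} (hXc : IsCompact X) {c : α × α → ℝ} (hc : Continuous c)
    {τ : ℝ} (hτ : 0 < τ) (μ₀ μ₁ ν : Measure α)
    [IsProbabilityMeasure μ₀] [IsProbabilityMeasure μ₁] [IsProbabilityMeasure ν]
    (hμ₀ : μ₀ Xᶜ = 0) (hμ₁ : μ₁ Xᶜ = 0) (hν : ν Xᶜ = 0)
    {s t : ℝ} (hs : 0 < s) (ht : 0 < t) (hst : s + t = 1) :
    EOT c τ (ENNReal.ofReal s • μ₀ + ENNReal.ofReal t • μ₁) ν
      ≤ (s : EReal) * EOT c τ μ₀ ν + (t : EReal) * EOT c τ μ₁ ν := by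
  obtain ⟨M, hM⟩ : ∃ M, ∀ q ∈ X ×ˢ X, ‖c q‖ ≤ M :=
    (hXc.prod hXc).exists_bound_of_continuousOn hc.continuousOn
  have hX : MeasurableSet X := hXc.isClosed.measurableSet
  set μt : Measure α := ENNReal.ofReal s • μ₀ + ENNReal.ofReal t • μ₁ with hμtdef
  haveI : IsProbabilityMeasure μt := by
    constructor
    rw [hμtdef, Measure.add_apply, Measure.smul_apply, Measure.smul_apply, measure_univ,
      measure_univ, smul_eq_mul, smul_eq_mul, mul_one, mul_one,
      ← ENNReal.ofReal_add hs.le ht.le, hst, ENNReal.ofReal_one]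
  have hμtX : μt Xᶜ = 0 := by
    rw [hμtdef, Measure.add_apply, Measure.smul_apply, Measure.smul_apply, hμ₀, hμ₁]
    simp
  obtain ⟨a, ha⟩ := EOT_exists_real hX hc hM hτ.le μ₀ ν hμ₀ hν
  obtain ⟨b, hb⟩ := EOT_exists_real hX hc hM hτ.le μ₁ ν hμ₁ hν
  obtain ⟨x, hx⟩ := EOT_exists_real hX hc hM hτ.le μt ν hμtX hν
  rw [ha, hb, hx, ← EReal.coe_mul, ← EReal.coe_mul, ← EReal.coe_add, EReal.coe_le_coe_iff]
  refine le_of_forall_pos_le_add fun ε hε => ?_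
  -- near-optimal couplings
  have hlt0 : EOT c τ μ₀ ν < ((a + ε : ℝ) : EReal) := by
    rw [ha]; exact_mod_cast (lt_add_of_pos_right a hε)
  have hlt1 : EOT c τ μ₁ ν < ((b + ε : ℝ) : EReal) := by
    rw [hb]; exact_mod_cast (lt_add_of_pos_right b hε)
  rw [show EOT c τ μ₀ ν = ⨅ γ : {γ : Measure (α × α) //
      γ.map Prod.fst = μ₀ ∧ γ.map Prod.snd = ν},
      ((∫ q, c q ∂(γ : Measure (α × α)) : ℝ) : EReal)
        + (τ : EReal) * relEnt (γ : Measure (α × α)) (μ₀.prod ν) from rfl] at hlt0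
  rw [show EOT c τ μ₁ ν = ⨅ γ : {γ : Measure (α × α) //
      γ.map Prod.fst = μ₁ ∧ γ.map Prod.snd = ν},
      ((∫ q, c q ∂(γ : Measure (α × α)) : ℝ) : EReal)
        + (τ : EReal) * relEnt (γ : Measure (α × α)) (μ₁.prod ν) from rfl] at hlt1
  obtain ⟨⟨γ₀, hm01, hm02⟩, hv0⟩ := iInf_lt_iff.mp hlt0
  obtain ⟨⟨γ₁, hm11, hm12⟩, hv1⟩ := iInf_lt_iff.mp hlt1
  simp only at hv0 hv1
  haveI : IsProbabilityMeasure γ₀ := coupling_prob hm01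
  haveI : IsProbabilityMeasure γ₁ := coupling_prob hm11
  -- extract finiteness of relEnt terms
  have hτE : (0 : EReal) < (τ : EReal) := by exact_mod_cast hτ
  have hne0 : relEnt γ₀ (μ₀.prod ν) ≠ ⊤ := by
    intro h
    rw [h, EReal.mul_top_of_pos hτE, EReal.coe_add_top] at hv0
    exact (not_top_lt hv0)
  have hne1 : relEnt γ₁ (μ₁.prod ν) ≠ ⊤ := by
    intro h
    rw [h, EReal.mul_top_of_pos hτE, EReal.coe_add_top] at hv1
    exact (not_top_lt hv1)
  have hcond0 : γ₀ ≪ μ₀.prod ν ∧ Integrable (llr γ₀ (μ₀.prod ν)) γ₀ := by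
    by_contra h
    rw [relEnt_eq_llr, if_neg h] at hne0
    exact hne0 rfl
  have hcond1 : γ₁ ≪ μ₁.prod ν ∧ Integrable (llr γ₁ (μ₁.prod ν)) γ₁ := by
    by_contra h
    rw [relEnt_eq_llr, if_neg h] at hne1
    exact hne1 rfl
  set H₀ : ℝ := ∫ q, llr γ₀ (μ₀.prod ν) q ∂γ₀ with hH₀
  set H₁ : ℝ := ∫ q, llr γ₁ (μ₁.prod ν) q ∂γ₁ with hH₁
  have hR0 : relEnt γ₀ (μ₀.prod ν) = (H₀ : EReal) := by
    rw [relEnt_eq_llr, if_pos hcond0]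
  have hR1 : relEnt γ₁ (μ₁.prod ν) = (H₁ : EReal) := by
    rw [relEnt_eq_llr, if_pos hcond1]
  rw [hR0, ← EReal.coe_mul, ← EReal.coe_add, EReal.coe_lt_coe_iff] at hv0
  rw [hR1, ← EReal.coe_mul, ← EReal.coe_add, EReal.coe_lt_coe_iff] at hv1
  -- the mixed coupling
  set γ : Measure (α × α) := ENNReal.ofReal s • γ₀ + ENNReal.ofReal t • γ₁ with hγdef
  have hm1 : γ.map Prod.fst = μt := by
    rw [hγdef, Measure.map_add _ _ measurable_fst, Measure.map_smul, Measure.map_smul,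
      hm01, hm11]
  have hm2 : γ.map Prod.snd = ν := by
    rw [hγdef, Measure.map_add _ _ measurable_snd, Measure.map_smul, Measure.map_smul,
      hm02, hm12, ← add_smul, ← ENNReal.ofReal_add hs.le ht.le, hst, ENNReal.ofReal_one,
      one_smul]
  haveI : IsProbabilityMeasure γ := coupling_prob hm1
  have hprodeq : μt.prod ν = ENNReal.ofReal s • (μ₀.prod ν) + ENNReal.ofReal t • (μ₁.prod ν) := by
    rw [hμtdef, Measure.add_prod, ofReal_smul_prod, ofReal_smul_prod]
  -- relEnt bound
  have hrel : relEnt γ (μt.prod ν) ≤ ((s * H₀ + t * H₁ : ℝ) : EReal) := by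
    rw [hprodeq]
    exact relEnt_convex γ₀ γ₁ (μ₀.prod ν) (μ₁.prod ν) hs ht hst hcond0.1 hcond1.1
      hcond0.2 hcond1.2
  have hnt : relEnt γ (μt.prod ν) ≠ ⊤ := (hrel.trans_lt (EReal.coe_lt_top _)).ne
  have hnb : relEnt γ (μt.prod ν) ≠ ⊥ :=
    ((EReal.bot_lt_coe 0).trans_le (by exact_mod_cast relEnt_nonneg γ (μt.prod ν))).ne'
  set R : ℝ := (relEnt γ (μt.prod ν)).toReal with hRdef
  have hcoeR : relEnt γ (μt.prod ν) = (R : EReal) := (EReal.coe_toReal hnt hnb).symm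
  have hRle : R ≤ s * H₀ + t * H₁ := EReal.coe_le_coe_iff.1 (hcoeR ▸ hrel)
  -- cost integral splits
  have hci0 : Integrable c γ₀ := coupling_cost_integrable hX hc hM hm01 hm02 hμ₀ hν
  have hci1 : Integrable c γ₁ := coupling_cost_integrable hX hc hM hm11 hm12 hμ₁ hν
  have hsplit : ∫ q, c q ∂γ = s * ∫ q, c q ∂γ₀ + t * ∫ q, c q ∂γ₁ := by
    rw [hγdef, integral_add_measure (hci0.smul_measure ENNReal.ofReal_ne_top)
      (hci1.smul_measure ENNReal.ofReal_ne_top), integral_smul_measure,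
      integral_smul_measure, ENNReal.toReal_ofReal hs.le, ENNReal.toReal_ofReal ht.le,
      smul_eq_mul, smul_eq_mul]
  -- main chain
  have hle : EOT c τ μt ν ≤ ((∫ q, c q ∂γ + τ * R : ℝ) : EReal) := by
    have h := iInf_le (fun γi : {δ : Measure (α × α) //
        δ.map Prod.fst = μt ∧ δ.map Prod.snd = ν} =>
      ((∫ q, c q ∂(γi : Measure (α × α)) : ℝ) : EReal)
        + (τ : EReal) * relEnt (γi : Measure (α × α)) (μt.prod ν)) ⟨γ, hm1, hm2⟩
    refine le_trans h ?_
    simp only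
    rw [hcoeR, ← EReal.coe_mul, ← EReal.coe_add]
  rw [hx, EReal.coe_le_coe_iff] at hle
  have e1 : s * (∫ q, c q ∂γ₀ + τ * H₀) ≤ s * (a + ε) := mul_le_mul_of_nonneg_left hv0.le hs.le
  have e2 : t * (∫ q, c q ∂γ₁ + τ * H₁) ≤ t * (b + ε) := mul_le_mul_of_nonneg_left hv1.le ht.le
  have e3 : τ * R ≤ τ * (s * H₀ + t * H₁) := mul_le_mul_of_nonneg_left hRle hτ.le
  have e4 : s * ε + t * ε = ε := by rw [← add_mul, hst, one_mul]
  nlinarith [hle, hsplit, e1, e2, e3, e4]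


lemma mix_prob (μ₀ μ₁ : Measure α) [IsProbabilityMeasure μ₀] [IsProbabilityMeasure μ₁]
    {s t : ℝ} (hs : 0 ≤ s) (ht : 0 ≤ t) (hst : s + t = 1) :
    IsProbabilityMeasure (ENNReal.ofReal s • μ₀ + ENNReal.ofReal t • μ₁) := by
  constructor
  rw [Measure.add_apply, Measure.smul_apply, Measure.smul_apply, measure_univ, measure_univ,
    smul_eq_mul, smul_eq_mul, mul_one, mul_one, ← ENNReal.ofReal_add hs ht, hst,
    ENNReal.ofReal_one]

end Topo
end EOTAux
end Aux

open EOTAux in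
/-- the entropic optimal transport cost `T_τ` is convex separately in each of
its two arguments. -/
theorem stmt_6 {d : ℕ} (X : Set (Pt d)) (hXc : IsCompact X) (hXne : X.Nonempty)
    (c : Pt d × Pt d → ℝ) (hc : Continuous c) (τ : ℝ) (hτ : 0 < τ)
    (μ₀ μ₁ ν : Measure (Pt d))
    [IsProbabilityMeasure μ₀] [IsProbabilityMeasure μ₁] [IsProbabilityMeasure ν]
    (hμ₀X : μ₀ Xᶜ = 0) (hμ₁X : μ₁ Xᶜ = 0) (hνX : ν Xᶜ = 0)
    (t : ℝ) (ht : t ∈ Icc (0 : ℝ) 1) :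
    EOT c τ (ENNReal.ofReal (1 - t) • μ₀ + ENNReal.ofReal t • μ₁) ν
      ≤ ((1 - t : ℝ) : EReal) * EOT c τ μ₀ ν + (t : EReal) * EOT c τ μ₁ ν ∧
    EOT c τ ν (ENNReal.ofReal (1 - t) • μ₀ + ENNReal.ofReal t • μ₁)
      ≤ ((1 - t : ℝ) : EReal) * EOT c τ ν μ₀ + (t : EReal) * EOT c τ ν μ₁ := by
  have hX : MeasurableSet X := hXc.isClosed.measurableSet
  obtain ⟨M, hM⟩ : ∃ M, ∀ q ∈ X ×ˢ X, ‖c q‖ ≤ M :=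
    (hXc.prod hXc).exists_bound_of_continuousOn hc.continuousOn
  have hc' : Continuous (fun q : Pt d × Pt d => c (q.2, q.1)) := hc.comp continuous_swap
  rcases eq_or_lt_of_le ht.1 with h0 | h0
  · -- t = 0
    have hmeas : ENNReal.ofReal (1 - t) • μ₀ + ENNReal.ofReal t • μ₁ = μ₀ := by
      rw [← h0]; simp
    obtain ⟨a, ha⟩ := EOT_exists_real hX hc hM hτ.le μ₀ ν hμ₀X hνX
    obtain ⟨b, hb⟩ := EOT_exists_real hX hc hM hτ.le μ₁ ν hμ₁X hνX
    obtain ⟨a', ha'⟩ := EOT_exists_real hX hc hM hτ.le ν μ₀ hνX hμ₀X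
    obtain ⟨b', hb'⟩ := EOT_exists_real hX hc hM hτ.le ν μ₁ hνX hμ₁X
    rw [hmeas, ← h0]
    constructor
    · rw [ha, hb, ← EReal.coe_mul, ← EReal.coe_mul, ← EReal.coe_add, EReal.coe_le_coe_iff]
      norm_num
    · rw [ha', hb', ← EReal.coe_mul, ← EReal.coe_mul, ← EReal.coe_add, EReal.coe_le_coe_iff]
      norm_num
  · rcases eq_or_lt_of_le ht.2 with h1 | h1
    · -- t = 1
      have hmeas : ENNReal.ofReal (1 - t) • μ₀ + ENNReal.ofReal t • μ₁ = μ₁ := by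
        rw [h1]; simp
      obtain ⟨a, ha⟩ := EOT_exists_real hX hc hM hτ.le μ₀ ν hμ₀X hνX
      obtain ⟨b, hb⟩ := EOT_exists_real hX hc hM hτ.le μ₁ ν hμ₁X hνX
      obtain ⟨a', ha'⟩ := EOT_exists_real hX hc hM hτ.le ν μ₀ hνX hμ₀X
      obtain ⟨b', hb'⟩ := EOT_exists_real hX hc hM hτ.le ν μ₁ hνX hμ₁X
      rw [hmeas, h1]
      constructor
      · rw [ha, hb, ← EReal.coe_mul, ← EReal.coe_mul, ← EReal.coe_add, EReal.coe_le_coe_iff]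
        norm_num
      · rw [ha', hb', ← EReal.coe_mul, ← EReal.coe_mul, ← EReal.coe_add, EReal.coe_le_coe_iff]
        norm_num
    · -- 0 < t < 1
      have hs : 0 < 1 - t := by linarith
      have hst : (1 - t) + t = 1 := by ring
      haveI : IsProbabilityMeasure (ENNReal.ofReal (1 - t) • μ₀ + ENNReal.ofReal t • μ₁) :=
        mix_prob μ₀ μ₁ hs.le h0.le hst
      constructor
      · exact EOT_convex_left hXc hc hτ μ₀ μ₁ ν hμ₀X hμ₁X hνX hs h0 hst
      · rw [EOT_swap c hc.measurable τ ν (ENNReal.ofReal (1 - t) • μ₀ + ENNReal.ofReal t • μ₁),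
          EOT_swap c hc.measurable τ ν μ₀, EOT_swap c hc.measurable τ ν μ₁]
        exact EOT_convex_left hXc hc' hτ μ₀ μ₁ ν hμ₀X hμ₁X hνX hs h0 hst
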